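/- Let T be the perfect binary tree with n = 2^D − 1 nodes (D ≥ 1) with nonnegative node weights, let δ ∈ (0,1], ε ∈ (0,1), and let k be a positive integer with k ≤ n^{1−δ}. Fix a level 1 ≤ η ≤ D and let T_1, …, T_M denote the pairwise disjoint largest subtrees rooted at the nodes of level η, with subtree weights u_1, …, u_M. Let m = ⌈(1+ε)·n^{1−δ}/ε⌉ and assume m ≤ M. Let u be the m-th largest value among u_1, …, u_M, and call T_j deleted if u_j < u. Then the minimum of ∑_{v∉Ω} x_v over all Ω ∈ 𝕋_k that contain no node of any deleted subtree is at most (1+ε) times the minimum of ∑_{v∉Ω} x_v over all Ω ∈ 𝕋_k. -/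
import Mathlib


open scoped Classical

/-- Nodes of the perfect binary tree with `n` nodes are `1, …, n` in heap order: the root is `1`
and the parent of node `v ≥ 2` is `v / 2`.  A rooted subtree is a set of nodes containing the
root and closed under taking parents. -/
def isRootedSubtree (n : ℕ) (Ω : Finset ℕ) : Prop :=
  Ω ⊆ Finset.Icc 1 n ∧ 1 ∈ Ω ∧ ∀ v ∈ Ω, 2 ≤ v → v / 2 ∈ Ω

/-- The subtree weight `u v`: the sum of the weights of all descendants of `v`
(`z` is a descendant of `v` iff `v` is obtained from `z` by iterated parent steps). -/
noncomputable def subtreeWeight (n : ℕ) (x : ℕ → ℝ) (v : ℕ) : ℝ :=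
  ∑ z ∈ (Finset.Icc 1 n).filter (fun z => ∃ j : ℕ, z / 2 ^ j = v), x z

/-- The tail value of `Ω`: the total weight of the nodes outside `Ω`. -/
noncomputable def tailValue (n : ℕ) (x : ℕ → ℝ) (Ω : Finset ℕ) : ℝ :=
  ∑ v ∈ Finset.Icc 1 n \ Ω, x v

noncomputable def Desc (n j : ℕ) : Finset ℕ :=
  (Finset.Icc 1 n).filter (fun z => ∃ i : ℕ, z / 2 ^ i = j)

lemma subtreeWeight_eq (n : ℕ) (x : ℕ → ℝ) (j : ℕ) :
    subtreeWeight n x j = ∑ z ∈ Desc n j, x z := rfl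

lemma anc_mem {n : ℕ} {Ω : Finset ℕ} (h : isRootedSubtree n Ω)
    {z : ℕ} (hz : z ∈ Ω) (i : ℕ) (hj : 1 ≤ z / 2 ^ i) : z / 2 ^ i ∈ Ω := by
  induction i with
  | zero => simpa using hz
  | succ i ih =>
    have hstep : z / 2 ^ (i+1) = (z / 2 ^ i) / 2 := by
      rw [Nat.div_div_eq_div_mul, pow_succ]
    rw [hstep] at hj ⊢
    have h2 : 2 ≤ z / 2 ^ i := (Nat.one_le_div_iff (by norm_num)).mp hj
    exact h.2.2 _ (ih (by omega)) h2

lemma same_level_le {a j j' z i i' : ℕ} (hle : i ≤ i')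
    (hja : 2 ^ a ≤ j') (hjb : j < 2 ^ (a+1))
    (h1 : z / 2 ^ i = j) (h2 : z / 2 ^ i' = j') : j = j' := by
  have hz : z / 2 ^ i' = j / 2 ^ (i' - i) := by
    rw [← h1, Nat.div_div_eq_div_mul, ← pow_add]
    congr 2
    omega
  rcases Nat.eq_or_lt_of_le hle with h | h
  · rw [h] at h1; omega
  · exfalso
    have h21 : (2:ℕ) ≤ 2 ^ (i' - i) := by
      calc (2:ℕ) = 2^1 := rfl
      _ ≤ 2 ^ (i'-i) := Nat.pow_le_pow_right (by norm_num) (by omega)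
    have hle2 : j / 2 ^ (i' - i) ≤ j / 2 := Nat.div_le_div_left h21 (by norm_num)
    have hlt : j / 2 < 2 ^ a := by
      rw [Nat.div_lt_iff_lt_mul (by norm_num)]
      calc j < 2 ^ (a+1) := hjb
      _ = 2 ^ a * 2 := by ring
    omega

lemma same_level_eq {a j j' z i i' : ℕ}
    (hj1 : 2 ^ a ≤ j) (hj2 : j < 2 ^ (a+1))
    (hj1' : 2 ^ a ≤ j') (hj2' : j' < 2 ^ (a+1))
    (h1 : z / 2 ^ i = j) (h2 : z / 2 ^ i' = j') : j = j' := by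
  rcases le_total i i' with h | h
  · exact same_level_le h hj1' hj2 h1 h2
  · exact (same_level_le h hj1 hj2' h2 h1).symm

lemma desc_disjoint {a : ℕ} {j j' : ℕ}
    (hj : j ∈ Finset.Ico (2^a) (2^(a+1))) (hj' : j' ∈ Finset.Ico (2^a) (2^(a+1)))
    (hne : j ≠ j') (n : ℕ) : Disjoint (Desc n j) (Desc n j') := by
  rw [Finset.disjoint_left]
  intro z hz hz'
  simp only [Desc, Finset.mem_filter] at hz hz'
  obtain ⟨-, i, hi⟩ := hz
  obtain ⟨-, i', hi'⟩ := hz'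
  rw [Finset.mem_Ico] at hj hj'
  exact hne (same_level_eq hj.1 hj.2 hj'.1 hj'.2 hi hi')

/-- In the perfect binary tree with `n = 2^D - 1` nodes (`D ≥ 1`) with
nonnegative weights, let `δ ∈ (0,1]`, `ε ∈ (0,1)`, and `k ≥ 1` with `k ≤ n^(1-δ)`.  Fix a
level `1 ≤ η ≤ D`; the roots of the (pairwise disjoint) largest subtrees rooted at level `η`
are the nodes `R = [2^(D-η), 2^(D-η+1))`, with subtree weights `u_j = subtreeWeight n x j`.
Let `m = ⌈(1+ε)·n^(1-δ)/ε⌉ ≤ M = |R|`, let `u` be the `m`-th largest subtree weight (i.e. `u`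
is one of the subtree weights, fewer than `m` of them exceed `u`, and at least `m` of them are
`≥ u`), and call the subtree rooted at `j ∈ R` deleted if `u_j < u`.  Then the minimum tail
value over `Ω ∈ 𝕋_k` avoiding all deleted subtrees is at most `(1+ε)` times the minimum tail
value over all of `𝕋_k` (stated as: some such `Ω` has tail value at most `(1+ε)` times the
tail value of every `Ω' ∈ 𝕋_k`). -/
theorem stmt16 (D n : ℕ) (hD : 1 ≤ D) (hn : n = 2 ^ D - 1)
    (x : ℕ → ℝ) (hx : ∀ v, 0 ≤ x v)
    (δ ε : ℝ) (hδ0 : 0 < δ) (hδ1 : δ ≤ 1) (hε0 : 0 < ε) (hε1 : ε < 1)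
    (k : ℕ) (hk1 : 1 ≤ k) (hk2 : (k : ℝ) ≤ (n : ℝ) ^ ((1 : ℝ) - δ))
    (η : ℕ) (hη1 : 1 ≤ η) (hη2 : η ≤ D)
    (R : Finset ℕ) (hR : R = Finset.Ico (2 ^ (D - η)) (2 ^ (D - η + 1)))
    (M m : ℕ) (hM : M = R.card)
    (hm : m = ⌈(1 + ε) * (n : ℝ) ^ ((1 : ℝ) - δ) / ε⌉₊) (hmM : m ≤ M)
    (u : ℝ) (humem : ∃ j ∈ R, subtreeWeight n x j = u)
    (hu1 : (R.filter (fun j => u < subtreeWeight n x j)).card < m)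
    (hu2 : m ≤ (R.filter (fun j => u ≤ subtreeWeight n x j)).card)
    (Del : Finset ℕ) (hDel : Del = R.filter (fun j => subtreeWeight n x j < u)) :
    ∃ Ω : Finset ℕ, isRootedSubtree n Ω ∧ Ω.card ≤ k ∧
      (∀ v ∈ Ω, ∀ j ∈ Del, ∀ i : ℕ, v / 2 ^ i ≠ j) ∧
      ∀ Ω' : Finset ℕ, isRootedSubtree n Ω' → Ω'.card ≤ k →
        tailValue n x Ω ≤ (1 + ε) * tailValue n x Ω' := by
  -- basic facts
  have hn1 : 1 ≤ n := by
    have h2 : (2:ℕ) ≤ 2 ^ D := by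
      calc (2:ℕ) = 2^1 := rfl
      _ ≤ 2 ^ D := Nat.pow_le_pow_right (by norm_num) hD
    omega
  have hnr1 : (1:ℝ) ≤ (n:ℝ) := by exact_mod_cast hn1
  have hpow1 : (1:ℝ) ≤ (n:ℝ) ^ ((1:ℝ) - δ) := Real.one_le_rpow hnr1 (by linarith)
  -- bounds on m
  have hmR : (1+ε) * (n:ℝ) ^ ((1:ℝ)-δ) / ε ≤ (m:ℝ) := hm ▸ Nat.le_ceil _
  have hmR' : (1+ε) * (n:ℝ) ^ ((1:ℝ)-δ) ≤ ε * (m:ℝ) := by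
    rw [div_le_iff₀ hε0] at hmR; linarith
  have hmk : (k:ℝ) ≤ ε * ((m:ℝ) - (k:ℝ)) := by nlinarith
  have hm2 : 2 ≤ m := by
    have h1 : (1:ℝ) < (1+ε) * (n:ℝ)^((1:ℝ)-δ) / ε := by
      rw [lt_div_iff₀ hε0]; nlinarith
    have h2 : 1 < m := by
      rw [hm]; exact Nat.lt_ceil.mpr (by exact_mod_cast h1)
    omega
  -- level is below the root
  have hMcard : M = 2 ^ (D - η) := by
    have hps : 2 ^ (D - η + 1) = 2 ^ (D-η) * 2 := pow_succ 2 _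
    rw [hM, hR, Nat.card_Ico]
    omega
  have haD : 1 ≤ D - η := by
    by_contra h
    have h0 : D - η = 0 := by omega
    rw [h0, pow_zero] at hMcard
    omega
  have hRmem : ∀ j ∈ R, 2 ≤ j := by
    intro j hj
    rw [hR, Finset.mem_Ico] at hj
    calc (2:ℕ) = 2^1 := rfl
    _ ≤ 2 ^ (D - η) := Nat.pow_le_pow_right (by norm_num) haD
    _ ≤ j := hj.1
  -- u is nonnegative
  have hu0 : 0 ≤ u := by
    obtain ⟨j, -, hj⟩ := humem
    rw [← hj, subtreeWeight_eq]
    exact Finset.sum_nonneg fun z _ => hx z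
  -- the minimizer Ω₀
  set S := (Finset.Icc 1 n).powerset.filter (fun s => isRootedSubtree n s ∧ s.card ≤ k)
    with hSdef
  have hone : ({1} : Finset ℕ) ∈ S := by
    have hsub : ({1} : Finset ℕ) ⊆ Finset.Icc 1 n := by
      intro v hv
      simp only [Finset.mem_singleton] at hv
      subst hv
      simp only [Finset.mem_Icc]
      omega
    simp only [hSdef, Finset.mem_filter, Finset.mem_powerset]
    refine ⟨hsub, ⟨hsub, by simp, ?_⟩, by simpa using hk1⟩
    intro v hv h2
    simp only [Finset.mem_singleton] at hv
    omega
  obtain ⟨Ω₀, hΩ₀S, hminΩ⟩ := S.exists_min_image (tailValue n x) ⟨_, hone⟩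
  simp only [hSdef, Finset.mem_filter, Finset.mem_powerset] at hΩ₀S
  obtain ⟨hΩ₀Icc, hΩ₀rs, hΩ₀k⟩ := hΩ₀S
  -- the candidate Ω
  set Ω := Ω₀.filter (fun v => ∀ j ∈ Del, ∀ i : ℕ, v / 2 ^ i ≠ j) with hΩdef
  have hΩΩ₀ : Ω ⊆ Ω₀ := Finset.filter_subset _ _
  have hΩrs : isRootedSubtree n Ω := by
    refine ⟨hΩΩ₀.trans hΩ₀rs.1, ?_, ?_⟩
    · rw [hΩdef, Finset.mem_filter]
      refine ⟨hΩ₀rs.2.1, fun j hj i hij => ?_⟩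
      have hj2 : 2 ≤ j := hRmem j (Finset.filter_subset _ _ (hDel ▸ hj))
      have : 1 / 2 ^ i ≤ 1 := Nat.div_le_self _ _
      omega
    · intro v hv h2
      rw [hΩdef, Finset.mem_filter] at hv ⊢
      refine ⟨hΩ₀rs.2.2 v hv.1 h2, fun j hj i hij => ?_⟩
      have : v / 2 ^ (i+1) = j := by
        rw [pow_succ', ← Nat.div_div_eq_div_mul]
        exact hij
      exact hv.2 j hj (i+1) this
  -- part (a): tail of Ω₀ is at least (m - k) * u
  have hGsum : ((m:ℝ) - (k:ℝ)) * u ≤ tailValue n x Ω₀ := by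
    set G := (R.filter (fun j => u ≤ subtreeWeight n x j)) \ Ω₀ with hGdef
    have hGR : ∀ j ∈ G, j ∈ R := fun j hj =>
      Finset.filter_subset _ _ (Finset.mem_sdiff.mp hj).1
    have hGcard : m ≤ G.card + k := by
      have h1 : (R.filter (fun j => u ≤ subtreeWeight n x j)).card ≤ G.card + Ω₀.card :=
        Finset.card_le_card_sdiff_add_card
      omega
    have hdisj : (↑G : Set ℕ).PairwiseDisjoint (Desc n) := by
      intro j hj j' hj' hne
      exact desc_disjoint (hR ▸ hGR j hj) (hR ▸ hGR j' hj') hne n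
    have hsub : G.biUnion (Desc n) ⊆ Finset.Icc 1 n \ Ω₀ := by
      intro z hz
      rw [Finset.mem_biUnion] at hz
      obtain ⟨j, hjG, hzj⟩ := hz
      simp only [Desc, Finset.mem_filter] at hzj
      obtain ⟨hzIcc, i, hi⟩ := hzj
      rw [Finset.mem_sdiff]
      refine ⟨hzIcc, fun hzΩ => ?_⟩
      have hj2 : 2 ≤ j := hRmem j (hGR j hjG)
      have hjΩ₀ : j ∈ Ω₀ := hi ▸ anc_mem hΩ₀rs hzΩ i (by omega)
      exact (Finset.mem_sdiff.mp hjG).2 hjΩ₀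
    calc ((m:ℝ) - (k:ℝ)) * u ≤ (G.card : ℝ) * u := by
          have : (m:ℝ) ≤ (G.card:ℝ) + (k:ℝ) := by exact_mod_cast hGcard
          nlinarith
    _ = ∑ _j ∈ G, u := by rw [Finset.sum_const, nsmul_eq_mul]
    _ ≤ ∑ j ∈ G, subtreeWeight n x j :=
        Finset.sum_le_sum fun j hj =>
          (Finset.mem_filter.mp (Finset.mem_sdiff.mp hj).1).2
    _ = ∑ z ∈ G.biUnion (Desc n), x z := by
        rw [Finset.sum_biUnion hdisj]
        simp only [subtreeWeight_eq]
    _ ≤ tailValue n x Ω₀ :=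
        Finset.sum_le_sum_of_subset_of_nonneg hsub (fun z _ _ => hx z)
  -- part (b): the removed weight is at most k * u
  have hbad : ∑ v ∈ Ω₀ \ Ω, x v ≤ (k:ℝ) * u := by
    set E := Del ∩ Ω₀ with hEdef
    have hER : ∀ j ∈ E, j ∈ R := fun j hj =>
      Finset.filter_subset _ _ (hDel ▸ (Finset.mem_inter.mp hj).1)
    have hdisj : (↑E : Set ℕ).PairwiseDisjoint (Desc n) := by
      intro j hj j' hj' hne
      exact desc_disjoint (hR ▸ hER j hj) (hR ▸ hER j' hj') hne n
    have hsub : Ω₀ \ Ω ⊆ E.biUnion (Desc n) := by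
      intro v hv
      rw [Finset.mem_sdiff] at hv
      obtain ⟨hvΩ₀, hvΩ⟩ := hv
      have hnot : ¬ (∀ j ∈ Del, ∀ i : ℕ, v / 2 ^ i ≠ j) := fun h =>
        hvΩ (Finset.mem_filter.mpr ⟨hvΩ₀, h⟩)
      push_neg at hnot
      obtain ⟨j, hjDel, i, hij⟩ := hnot
      have hjR : j ∈ R := Finset.filter_subset _ _ (hDel ▸ hjDel)
      have hj2 : 2 ≤ j := hRmem j hjR
      have hjΩ₀ : j ∈ Ω₀ := hij ▸ anc_mem hΩ₀rs hvΩ₀ i (by omega)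
      rw [Finset.mem_biUnion]
      refine ⟨j, Finset.mem_inter.mpr ⟨hjDel, hjΩ₀⟩, ?_⟩
      simp only [Desc, Finset.mem_filter]
      exact ⟨hΩ₀rs.1 hvΩ₀, i, hij⟩
    have hEk : (E.card : ℝ) ≤ (k:ℝ) := by
      have : E.card ≤ k :=
        le_trans (Finset.card_le_card Finset.inter_subset_right) hΩ₀k
      exact_mod_cast this
    calc ∑ v ∈ Ω₀ \ Ω, x v ≤ ∑ z ∈ E.biUnion (Desc n), x z :=
          Finset.sum_le_sum_of_subset_of_nonneg hsub (fun z _ _ => hx z)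
    _ = ∑ j ∈ E, subtreeWeight n x j := by
        rw [Finset.sum_biUnion hdisj]
        simp only [subtreeWeight_eq]
    _ ≤ ∑ _j ∈ E, u := Finset.sum_le_sum fun j hj => by
        have := (Finset.mem_filter.mp (hDel ▸ (Finset.mem_inter.mp hj).1)).2
        exact le_of_lt this
    _ = (E.card : ℝ) * u := by rw [Finset.sum_const, nsmul_eq_mul]
    _ ≤ (k:ℝ) * u := by nlinarith
  -- tail decomposition
  have hdecomp : tailValue n x Ω = tailValue n x Ω₀ + ∑ v ∈ Ω₀ \ Ω, x v := by
    rw [tailValue, tailValue,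
      Finset.sum_sdiff_eq_sub (hΩΩ₀.trans hΩ₀rs.1),
      Finset.sum_sdiff_eq_sub hΩ₀rs.1,
      Finset.sum_sdiff_eq_sub hΩΩ₀]
    ring
  -- conclusion
  refine ⟨Ω, hΩrs, le_trans (Finset.card_le_card hΩΩ₀) hΩ₀k,
    fun v hv => (Finset.mem_filter.mp hv).2, fun Ω' hΩ' hΩ'k => ?_⟩
  have hΩ'S : Ω' ∈ S := by
    simp only [hSdef, Finset.mem_filter, Finset.mem_powerset]
    exact ⟨hΩ'.1, hΩ', hΩ'k⟩
  have hmin' : tailValue n x Ω₀ ≤ tailValue n x Ω' := hminΩ Ω' hΩ'S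
  have h1 : (k:ℝ) * u ≤ ε * ((m:ℝ) - (k:ℝ)) * u :=
    mul_le_mul_of_nonneg_right hmk hu0
  have h2 : ε * ((m:ℝ) - (k:ℝ)) * u ≤ ε * tailValue n x Ω₀ := by
    rw [mul_assoc]
    exact mul_le_mul_of_nonneg_left hGsum hε0.le
  have hchain : tailValue n x Ω ≤ (1 + ε) * tailValue n x Ω₀ := by
    rw [hdecomp]
    linarith
  calc tailValue n x Ω ≤ (1 + ε) * tailValue n x Ω₀ := hchain
  _ ≤ (1 + ε) * tailValue n x Ω' := mul_le_mul_of_nonneg_left hmin' (by linarith)
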